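/- Let ζ₁₁ = exp(2πi/11) ∈ ℂ, ξ = ζ₁₁ + ζ₁₁⁻¹, and let L be the smallest subfield of ℂ containing i√3 and ξ (that is, L = ℚ(√−3, ξ)). Then ξ − 1 is not a square in L: there is no v ∈ L with v² = ξ − 1. -/

import Mathlib

open Complex

open Polynomial

private lemma real_of_mem_adjoin_real {s : Set ℂ} (hs : ∀ x ∈ s, ∃ r : ℝ, x = (r : ℂ))
    {x : ℂ} (hx : x ∈ IntermediateField.adjoin ℚ s) : ∃ r : ℝ, x = (r : ℂ) := by
  let R : IntermediateField ℚ ℂ :=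
    Subfield.toIntermediateField Complex.ofRealHom.fieldRange
      (fun q => ⟨(q : ℝ), by simp⟩)
  have hle : IntermediateField.adjoin ℚ s ≤ R := by
    rw [IntermediateField.adjoin_le_iff]
    intro y hy
    obtain ⟨r, hr⟩ := hs y hy
    exact ⟨r, hr.symm⟩
  obtain ⟨r, hr⟩ := RingHom.mem_fieldRange.mp (hle hx)
  exact ⟨r, hr.symm⟩

private lemma exp_add_inv_exp (a : ℝ) :
    Complex.exp ((a : ℂ) * I) + (Complex.exp ((a : ℂ) * I))⁻¹ = ((2 * Real.cos a : ℝ) : ℂ) := by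
  rw [← Complex.exp_neg]
  have h := Complex.two_cos (a : ℂ)
  rw [neg_mul] at h
  rw [← h, ← Complex.ofReal_cos]
  push_cast
  ring

set_option maxHeartbeats 1000000

/-- Example 4 of the paper (5-relay MIMO code, anisotropy): with
`ξ = ζ₁₁ + ζ₁₁⁻¹` and `L = ℚ(√−3, ξ) ⊂ ℂ`, the element `ξ − 1` is not a
square in `L`. -/
theorem xi11_sub_one_not_square
    (ζ : ℂ) (hζ : ζ = Complex.exp (2 * Real.pi * Complex.I / 11))
    (ξ : ℂ) (hξ : ξ = ζ + ζ⁻¹)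
    (L : IntermediateField ℚ ℂ)
    (hL : L = IntermediateField.adjoin ℚ {Complex.I * Real.sqrt 3, ξ}) :
    ∀ v : ℂ, v ∈ L → v ^ 2 ≠ ξ - 1 := by
  intro v hv heq
  have hprim : IsPrimitiveRoot ζ 11 := by
    rw [hζ]
    have := Complex.isPrimitiveRoot_exp 11 (by norm_num)
    simpa using this
  have hζ0 : ζ ≠ 0 := by rw [hζ]; exact Complex.exp_ne_zero _
  have hζ11 : ζ ^ 11 = 1 := hprim.pow_eq_one
  have hζinv : ζ⁻¹ = ζ ^ 10 := by
    have h : ζ * ζ ^ 10 = 1 := by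
      have : ζ * ζ ^ 10 = ζ ^ 11 := by ring
      rw [this, hζ11]
    exact inv_eq_of_mul_eq_one_right h
  have harg : (2 * Real.pi * Complex.I / 11 : ℂ) = ((2 * Real.pi / 11 : ℝ) : ℂ) * I := by
    push_cast; ring
  have hξr : ξ = ((2 * Real.cos (2 * Real.pi / 11) : ℝ) : ℂ) := by
    rw [hξ, hζ, harg, exp_add_inv_exp]
  have hζsq : ζ ^ 2 = Complex.exp (((4 * Real.pi / 11 : ℝ) : ℂ) * I) := by
    rw [hζ, ← Complex.exp_nat_mul]
    congr 1
    push_cast; ring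
  have hζ20 : ζ ^ 20 = (ζ ^ 2)⁻¹ := by
    have h : ζ ^ 20 * ζ ^ 2 = 1 := by
      have : ζ ^ 20 * ζ ^ 2 = (ζ ^ 11) ^ 2 := by ring
      rw [this, hζ11, one_pow]
    exact eq_inv_of_mul_eq_one_left h
  have hξ2r : ζ ^ 2 + ζ ^ 20 = ((2 * Real.cos (4 * Real.pi / 11) : ℝ) : ℂ) := by
    rw [hζ20, hζsq, exp_add_inv_exp]
  have hpi := Real.pi_pos
  have hc1 : (1 : ℝ) / 2 < Real.cos (2 * Real.pi / 11) := by
    have h := Real.cos_lt_cos_of_nonneg_of_le_pi (x := 2 * Real.pi / 11) (y := Real.pi / 3)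
      (by positivity) (by linarith) (by linarith)
    rwa [Real.cos_pi_div_three] at h
  have hc2 : Real.cos (4 * Real.pi / 11) < 1 / 2 := by
    have h := Real.cos_lt_cos_of_nonneg_of_le_pi (x := Real.pi / 3) (y := 4 * Real.pi / 11)
      (by positivity) (by linarith) (by linarith)
    rwa [Real.cos_pi_div_three] at h
  -- v is real
  have hveq : v ^ 2 = ((2 * Real.cos (2 * Real.pi / 11) - 1 : ℝ) : ℂ) := by
    rw [heq, hξr]; push_cast; ring
  have hv2re : (v ^ 2).re = 2 * Real.cos (2 * Real.pi / 11) - 1 := by rw [hveq, Complex.ofReal_re]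
  have hv2im : (v ^ 2).im = 0 := by rw [hveq, Complex.ofReal_im]
  have hre2 : (v ^ 2).re = v.re ^ 2 - v.im ^ 2 := by
    rw [pow_two, Complex.mul_re]; ring
  have him2' : (v ^ 2).im = 2 * v.re * v.im := by
    rw [pow_two, Complex.mul_im]; ring
  have him : v.im = 0 := by
    by_contra h
    have h1 : 2 * v.re * v.im = 0 := by rw [← him2', hv2im]
    have h2 : v.re = 0 := by
      rcases mul_eq_zero.mp h1 with h' | h'
      · rcases mul_eq_zero.mp h' with h'' | h''
        · norm_num at h''
        · exact h''
      · exact absurd h' h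
    nlinarith [hv2re, hre2, sq_nonneg v.im, hc1]
  -- structure of L
  set d : ℂ := Complex.I * (Real.sqrt 3 : ℝ) with hd
  set K : IntermediateField ℚ ℂ := IntermediateField.adjoin ℚ {ξ} with hK
  have hKreal : ∀ x ∈ K, ∃ r : ℝ, x = (r : ℂ) := by
    intro x hx
    refine real_of_mem_adjoin_real ?_ hx
    intro y hy
    rw [Set.mem_singleton_iff] at hy
    exact ⟨_, hy ▸ hξr⟩
  have hd2 : d ^ 2 = -3 := by
    rw [hd, mul_pow, Complex.I_sq, ← Complex.ofReal_pow,
      Real.sq_sqrt (by norm_num : (0:ℝ) ≤ 3)]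
    norm_num
  have h3K : (3 : ℂ) ∈ K := by
    have := K.algebraMap_mem (3 : ℚ)
    simpa using this
  have hpair : ∀ a b : ℂ, a ∈ K → b ∈ K → a + b * d = 0 → a = 0 ∧ b = 0 := by
    intro a b ha hb h0
    obtain ⟨ra, hra⟩ := hKreal a ha
    obtain ⟨rb, hrb⟩ := hKreal b hb
    rw [hra, hrb, hd] at h0
    have hre : ra = 0 := by
      have := congrArg Complex.re h0
      simpa using this
    have him3 : rb * Real.sqrt 3 = 0 := by
      have := congrArg Complex.im h0
      simpa using this
    have hs3 : Real.sqrt 3 ≠ 0 := by positivity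
    have hrb0 : rb = 0 := by
      rcases mul_eq_zero.mp him3 with h' | h'
      · exact h'
      · exact absurd h' hs3
    constructor
    · rw [hra, hre]; simp
    · rw [hrb, hrb0]; simp
  let S : Subfield ℂ :=
    { carrier := {x : ℂ | ∃ a ∈ K, ∃ b ∈ K, x = a + b * d}
      zero_mem' := ⟨0, zero_mem K, 0, zero_mem K, by ring⟩
      one_mem' := ⟨1, one_mem K, 0, zero_mem K, by ring⟩
      add_mem' := by
        rintro x y ⟨a, ha, b, hb, rfl⟩ ⟨c, hc, e, he, rfl⟩
        exact ⟨a + c, add_mem ha hc, b + e, add_mem hb he, by ring⟩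
      neg_mem' := by
        rintro x ⟨a, ha, b, hb, rfl⟩
        exact ⟨-a, neg_mem ha, -b, neg_mem hb, by ring⟩
      mul_mem' := by
        rintro x y ⟨a, ha, b, hb, rfl⟩ ⟨c, hc, e, he, rfl⟩
        refine ⟨a * c - 3 * (b * e), sub_mem (mul_mem ha hc) (mul_mem h3K (mul_mem hb he)),
          a * e + b * c, add_mem (mul_mem ha he) (mul_mem hb hc), ?_⟩
        linear_combination (b * e) * hd2
      inv_mem' := by
        rintro x ⟨a, ha, b, hb, rfl⟩
        by_cases h0 : a + b * d = 0
        · rw [h0]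
          exact ⟨0, zero_mem K, 0, zero_mem K, by simp⟩
        · set n : ℂ := a ^ 2 + 3 * b ^ 2 with hn
          have hnK : n ∈ K := add_mem (pow_mem ha 2) (mul_mem h3K (pow_mem hb 2))
          have hn0 : n ≠ 0 := by
            intro hz
            obtain ⟨ra, hra⟩ := hKreal a ha
            obtain ⟨rb, hrb⟩ := hKreal b hb
            rw [hn, hra, hrb] at hz
            have hz' : ra ^ 2 + 3 * rb ^ 2 = 0 := by exact_mod_cast hz
            have hra0 : ra = 0 := by nlinarith [sq_nonneg ra, sq_nonneg rb]
            have hrb0 : rb = 0 := by nlinarith [sq_nonneg ra, sq_nonneg rb]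
            apply h0
            rw [hra, hrb, hra0, hrb0]
            simp
          have hmuln : (a + b * d) * (a - b * d) = n := by
            rw [hn]; linear_combination (-(b ^ 2)) * hd2
          have hmul1 : (a + b * d) * (a / n + (-b / n) * d) = 1 := by
            have : (a + b * d) * (a / n + (-b / n) * d) = ((a + b * d) * (a - b * d)) / n := by
              ring
            rw [this, hmuln, div_self hn0]
          exact ⟨a / n, div_mem ha hnK, -b / n, div_mem (neg_mem hb) hnK,
            inv_eq_of_mul_eq_one_right hmul1⟩ }
  let S' : IntermediateField ℚ ℂ :=
    Subfield.toIntermediateField S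
      (fun q => ⟨algebraMap ℚ ℂ q, K.algebraMap_mem q, 0, zero_mem K, by ring⟩)
  have hLS : L ≤ S' := by
    rw [hL, IntermediateField.adjoin_le_iff]
    intro x hx
    rcases Set.mem_insert_iff.mp hx with rfl | hx
    · exact ⟨0, zero_mem K, 1, one_mem K, by rw [hd]; ring⟩
    · rw [Set.mem_singleton_iff] at hx
      subst hx
      exact ⟨x, IntermediateField.mem_adjoin_simple_self ℚ x, 0, zero_mem K, by ring⟩
  obtain ⟨a, ha, b, hb, hvab⟩ := hLS hv
  obtain ⟨ra, hra⟩ := hKreal a ha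
  obtain ⟨rb, hrb⟩ := hKreal b hb
  have hrb0 : rb = 0 := by
    have h := congrArg Complex.im hvab
    rw [hra, hrb, hd, him] at h
    have h' : rb * Real.sqrt 3 = 0 := by simpa using h.symm
    rcases mul_eq_zero.mp h' with h'' | h''
    · exact h''
    · exact absurd h'' (by positivity : Real.sqrt 3 ≠ 0)
  have hvK : v ∈ K := by
    rw [hvab, hrb, hrb0]
    simpa using ha
  -- v = p(ξ) for a rational polynomial p
  have hζint : IsIntegral ℚ ζ :=
    ⟨X ^ 11 - C 1, monic_X_pow_sub_C 1 (by norm_num), by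
      rw [eval₂_sub, eval₂_X_pow, eval₂_C, hζ11]; simp⟩
  have hξint : IsIntegral ℚ ξ := by
    rw [hξ, hζinv]
    exact hζint.add (hζint.pow 10)
  have hvA : v ∈ Algebra.adjoin ℚ {ξ} := by
    rw [← IntermediateField.adjoin_simple_toSubalgebra_of_isAlgebraic hξint.isAlgebraic,
      IntermediateField.mem_toSubalgebra]
    exact hvK
  rw [Algebra.adjoin_singleton_eq_range_aeval] at hvA
  obtain ⟨p, hp⟩ := (AlgHom.mem_range (Polynomial.aeval ξ)).mp hvA
  -- the relation q(ξ) = 0 with q = p² - (X - 1)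
  set q : ℚ[X] := p ^ 2 - (X - C 1) with hq
  have hq1 : aeval ξ q = 0 := by
    rw [hq, map_sub, map_pow, map_sub, aeval_X, aeval_C, hp]
    rw [heq]
    simp
  set s : ℚ[X] := q.comp (X + X ^ 10) with hs
  have hs1 : aeval ζ s = 0 := by
    rw [hs, aeval_comp]
    have h : aeval ζ (X + X ^ 10 : ℚ[X]) = ξ := by
      rw [map_add, aeval_X, map_pow, aeval_X, hξ, hζinv]
    rw [h, hq1]
  have hdvd : minpoly ℚ ζ ∣ s := minpoly.dvd ℚ ζ hs1
  rw [← Polynomial.cyclotomic_eq_minpoly_rat hprim (by norm_num)] at hdvd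
  obtain ⟨c, hc⟩ := hdvd
  have hroot : aeval (ζ ^ 2) (cyclotomic 11 ℚ) = 0 := by
    have h2 : IsPrimitiveRoot (ζ ^ 2) 11 := hprim.pow_of_coprime 2 (by norm_num)
    have h3 := h2.isRoot_cyclotomic (by norm_num)
    rw [Polynomial.IsRoot] at h3
    rw [aeval_def, eval₂_eq_eval_map, map_cyclotomic]
    exact h3
  have hs2 : aeval (ζ ^ 2) s = 0 := by rw [hc, map_mul, hroot, zero_mul]
  have hq2 : aeval (ζ ^ 2 + ζ ^ 20) q = 0 := by
    rw [hs, aeval_comp] at hs2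
    have h : aeval (ζ ^ 2) (X + X ^ 10 : ℚ[X]) = ζ ^ 2 + ζ ^ 20 := by
      rw [map_add, aeval_X, map_pow, aeval_X, ← pow_mul]
    rwa [h] at hs2
  -- conclude: a real square equals 2cos(4π/11) - 1 < 0
  have hsq : (aeval (ζ ^ 2 + ζ ^ 20) p) ^ 2 = (ζ ^ 2 + ζ ^ 20) - 1 := by
    rw [hq, map_sub, map_pow, map_sub, aeval_X, aeval_C, map_one] at hq2
    linear_combination hq2
  set r2 : ℝ := 2 * Real.cos (4 * Real.pi / 11) with hr2
  have hw : aeval (ζ ^ 2 + ζ ^ 20) p = ((aeval r2 p : ℝ) : ℂ) := by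
    rw [hξ2r]
    exact_mod_cast Polynomial.aeval_algebraMap_apply ℂ (r2 : ℝ) p
  have hfin : (aeval r2 p : ℝ) ^ 2 = r2 - 1 := by
    have h : (((aeval r2 p : ℝ) ^ 2 : ℝ) : ℂ) = ((r2 - 1 : ℝ) : ℂ) := by
      push_cast
      rw [← hw, hsq, hξ2r]
    exact_mod_cast h
  nlinarith [sq_nonneg (aeval r2 p : ℝ), hc2, hfin]
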